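/- arXiv:1408.4205 — 3 statements merged into one kernel-verified Lean document; each statement's English description precedes it below -/
import Mathlib

section
/- For the Kronecker square K^{[2]} of a Fredholm integral operator, defined via the squared kernel K²(u,v), the variance bound Var(L_n(u, θ_n)) ≤ ‖f‖²·‖|K^{[2]}|‖^n holds, where L_n(u, θ_n) = K(u,γ(1))K(γ(1),γ(2))⋯K(γ(n-1),γ(n)) f(γ(n)) with γ(i) i.i.d. with law ν; more precisely E[L_n(u,θ_n)²] ≤ ‖f‖²·‖|K^{[2]}|‖^n. -/
open MeasureTheory
set_option linter.unusedSectionVars false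
set_option maxHeartbeats 1000000

lemma cont_integrable' {X : Type*} [TopologicalSpace X] [MeasurableSpace X]
    [OpensMeasurableSpace X] [CompactSpace X] [T2Space X] (μ : Measure X) [IsFiniteMeasure μ]
    {g : X → ℝ} (hg : Continuous g) : Integrable g μ :=
  hg.integrable_of_hasCompactSupport (HasCompactSupport.of_compactSpace g)

/-- previous point in the chain -/
def predPt {V : Type*} (u : V) {m : ℕ} (x : Fin (m + 1) → V) (i : Fin (m + 1)) : V :=
  if _ : (i : ℕ) = 0 then u else x ⟨(i : ℕ) - 1, (by have := i.isLt; omega : (i : ℕ) - 1 < Nat.succ m)⟩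

lemma cons_mk_succ {V : Type*} {n : ℕ} (v : V) (y : Fin (n+1) → V) (m : ℕ) (h : m + 1 < n + 2) :
    (Fin.cons v y : Fin (n+2) → V) ⟨m+1, h⟩ = y ⟨m, by omega⟩ := by
  have : (⟨m+1, h⟩ : Fin (n+2)) = Fin.succ ⟨m, by omega⟩ := rfl
  rw [this, Fin.cons_succ]

lemma predPt_cons {V : Type*} {n : ℕ} (u v : V) (y : Fin (n+1) → V) (i : Fin (n+1)) :
    predPt u (Fin.cons v y : Fin (n+2) → V) i.succ = predPt v y i := by
  unfold predPt
  rcases eq_or_ne (i : ℕ) 0 with h0 | h0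
  · rw [dif_neg (by simp), dif_pos h0]
    have : (⟨(i.succ : ℕ) - 1, by have := i.succ.isLt; omega⟩ : Fin (n+2)) = 0 :=
      Fin.ext (by simp [Fin.val_succ, h0])
    rw [this, Fin.cons_zero]
  · rw [dif_neg (by simp), dif_neg h0]
    have hlt : ((i : ℕ) - 1) + 1 < n + 2 := by have := i.isLt; omega
    have : (⟨(i.succ : ℕ) - 1, by have := i.succ.isLt; omega⟩ : Fin (n+2))
        = ⟨((i : ℕ) - 1) + 1, hlt⟩ := Fin.ext (by simp [Fin.val_succ]; omega)
    rw [this, cons_mk_succ]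

section key
variable {V : Type*} [MetricSpace V] [CompactSpace V] [Nonempty V]
    [MeasurableSpace V] [BorelSpace V]
    (ν : Measure V) [IsProbabilityMeasure ν]
    {K : V → V → ℝ} {f : V → ℝ}

lemma Kbdd (hK : Continuous fun p : V × V => K p.1 p.2) :
    BddAbove (Set.range fun w => ∫ v, K w v ^ 2 ∂ν) := by
  obtain ⟨C, hC⟩ := (isCompact_range ((hK.pow 2))).bddAbove
  refine ⟨C, ?_⟩
  rintro x ⟨w, rfl⟩
  calc ∫ v, K w v ^ 2 ∂ν ≤ ∫ _, C ∂ν := by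
        refine integral_mono (cont_integrable' ν ?_) (integrable_const C) fun v => ?_
        · exact (hK.comp (Continuous.prodMk_right w)).pow 2
        · exact hC ⟨(w, v), rfl⟩
    _ = C := by simp

lemma KleM (hK : Continuous fun p : V × V => K p.1 p.2) (w : V) :
    ∫ v, K w v ^ 2 ∂ν ≤ ⨆ w, ∫ v, K w v ^ 2 ∂ν :=
  le_ciSup (Kbdd ν hK) w

lemma Mnonneg (hK : Continuous fun p : V × V => K p.1 p.2) :
    0 ≤ ⨆ w, ∫ v, K w v ^ 2 ∂ν := by
  obtain ⟨w⟩ := ‹Nonempty V›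
  exact le_trans (integral_nonneg fun v => sq_nonneg _) (KleM ν hK w)

lemma fleF (hf : Continuous f) (v : V) : |f v| ≤ ⨆ v, |f v| :=
  le_ciSup (isCompact_range hf.abs).bddAbove v

lemma contG (hK : Continuous fun p : V × V => K p.1 p.2) (hf : Continuous f) (n : ℕ) (u : V) :
    Continuous fun x : Fin (n+1) → V =>
      ((∏ i : Fin (n+1), K (predPt u x i) (x i)) * f (x (Fin.last n))) ^ 2 := by
  refine Continuous.pow (Continuous.mul ?_ (hf.comp (continuous_apply _))) 2
  refine continuous_finset_prod _ fun i _ => ?_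
  unfold predPt
  rcases eq_or_ne (i : ℕ) 0 with h | h
  · simp only [h, dif_pos]
    exact hK.comp₂ continuous_const (continuous_apply i)
  · simp only [h, dif_neg]
    exact hK.comp₂ (continuous_apply _) (continuous_apply i)

lemma key (hK : Continuous fun p : V × V => K p.1 p.2) (hf : Continuous f) :
    ∀ (n : ℕ) (u : V),
      (∫ x : Fin (n+1) → V,
        ((∏ i : Fin (n+1), K (predPt u x i) (x i)) * f (x (Fin.last n))) ^ 2
        ∂(Measure.pi fun _ => ν))
      ≤ (⨆ v, |f v|) ^ 2 * (⨆ w, ∫ v, K w v ^ 2 ∂ν) ^ (n+1) := by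
  intro n
  set F := (⨆ v, |f v|) with hF
  set M := (⨆ w, ∫ v, K w v ^ 2 ∂ν) with hM
  induction n with
  | zero =>
    intro u
    have he := (measurePreserving_funUnique ν (Fin 1)).integral_comp'
      (fun v : V => (K u v * f v) ^ 2)
    rw [show (fun x : Fin 1 → V =>
        ((∏ i : Fin 1, K (predPt u x i) (x i)) * f (x (Fin.last 0))) ^ 2)
        = fun x : Fin 1 → V => (K u (MeasurableEquiv.funUnique (Fin 1) V x)
            * f (MeasurableEquiv.funUnique (Fin 1) V x)) ^ 2 from ?_]
    erw [he]
    · calc ∫ v, (K u v * f v) ^ 2 ∂ν ≤ ∫ v, K u v ^ 2 * F ^ 2 ∂ν := by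
            refine integral_mono (cont_integrable' ν ?_) (cont_integrable' ν ?_) fun v => ?_
            · exact ((hK.comp (Continuous.prodMk_right u)).mul hf).pow 2
            · exact ((hK.comp (Continuous.prodMk_right u)).pow 2).mul continuous_const
            · rw [mul_pow]
              refine mul_le_mul_of_nonneg_left ?_ (sq_nonneg _)
              rw [← sq_abs (f v)]
              exact pow_le_pow_left₀ (abs_nonneg _) (fleF hf v) 2
        _ = (∫ v, K u v ^ 2 ∂ν) * F ^ 2 := integral_mul_const _ _
        _ ≤ M * F ^ 2 := mul_le_mul_of_nonneg_right (KleM ν hK u) (sq_nonneg _)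
        _ = F ^ 2 * M ^ (0+1) := by ring
    · funext x
      simp [Fin.prod_univ_one, Fin.last, MeasurableEquiv.funUnique, predPt]
  | succ n ih =>
    intro u
    have hMn : (0:ℝ) ≤ M := Mnonneg ν hK
    have hmp := measurePreserving_piFinSuccAbove (fun _ : Fin (n+2) => ν) 0
    have hsymm : ∀ p : V × (Fin (n+1) → V),
        (MeasurableEquiv.piFinSuccAbove (fun _ : Fin (n+2) => V) 0).symm p
          = Fin.cons p.1 p.2 := by
      intro p
      simp [MeasurableEquiv.piFinSuccAbove, Fin.insertNthEquiv, Fin.insertNth_zero]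
    have hconsc : Continuous fun p : V × (Fin (n+1) → V) => (Fin.cons p.1 p.2 : Fin (n+2) → V) := by
      apply continuous_pi; intro j
      rcases Fin.eq_zero_or_eq_succ j with rfl | ⟨k, rfl⟩
      · simpa using continuous_fst
      · simpa only [Fin.cons_succ, Function.comp_def] using (continuous_apply k).comp continuous_snd
    have hHc : Continuous fun p : V × (Fin (n+1) → V) =>
        ((∏ i : Fin (n+2), K (predPt u (Fin.cons p.1 p.2 : Fin (n+2) → V) i) ((Fin.cons p.1 p.2 : Fin (n+2) → V) i))
          * f ((Fin.cons p.1 p.2 : Fin (n+2) → V) (Fin.last (n+1)))) ^ 2 := (contG hK hf (n+1) u).comp hconsc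
    have hHint : Integrable (fun p : V × (Fin (n+1) → V) =>
        ((∏ i : Fin (n+2), K (predPt u (Fin.cons p.1 p.2 : Fin (n+2) → V) i) ((Fin.cons p.1 p.2 : Fin (n+2) → V) i))
          * f ((Fin.cons p.1 p.2 : Fin (n+2) → V) (Fin.last (n+1)))) ^ 2)
        (ν.prod (Measure.pi fun _ => ν)) := cont_integrable' _ hHc
    have hrw : ∀ (v : V) (y : Fin (n+1) → V),
        ((∏ i : Fin (n+2), K (predPt u (Fin.cons v y : Fin (n+2) → V) i) ((Fin.cons v y : Fin (n+2) → V) i))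
          * f ((Fin.cons v y : Fin (n+2) → V) (Fin.last (n+1)))) ^ 2
        = K u v ^ 2 * ((∏ i : Fin (n+1), K (predPt v y i) (y i)) * f (y (Fin.last n))) ^ 2 := by
      intro v y
      have h1 : (∏ i : Fin (n+2), K (predPt u (Fin.cons v y : Fin (n+2) → V) i) ((Fin.cons v y : Fin (n+2) → V) i))
          = K u v * ∏ i : Fin (n+1), K (predPt v y i) (y i) := by
        rw [Fin.prod_univ_succ]
        have e0 : K (predPt u (Fin.cons v y : Fin (n+2) → V) 0)
            ((Fin.cons v y : Fin (n+2) → V) 0) = K u v := by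
          simp [predPt]
        rw [e0]
        congr 1
        refine Finset.prod_congr rfl fun i _ => ?_
        rw [show predPt u (Fin.cons v y : Fin (n+2) → V) i.succ = predPt v y i from
            predPt_cons u v y i,
          show (Fin.cons v y : Fin (n+2) → V) i.succ = y i from @Fin.cons_succ (n+1) (fun _ => V) v y i]
      have h2 : (Fin.cons v y : Fin (n+2) → V) (Fin.last (n+1)) = y (Fin.last n) := by
        rw [← Fin.succ_last, Fin.cons_succ]
      rw [h1, h2]; ring
    calc (∫ x : Fin (n+2) → V,
            ((∏ i : Fin (n+2), K (predPt u x i) (x i)) * f (x (Fin.last (n+1)))) ^ 2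
            ∂(Measure.pi fun _ => ν))
        = ∫ p : V × (Fin (n+1) → V),
            ((∏ i : Fin (n+2), K (predPt u (Fin.cons p.1 p.2 : Fin (n+2) → V) i) ((Fin.cons p.1 p.2 : Fin (n+2) → V) i))
              * f ((Fin.cons p.1 p.2 : Fin (n+2) → V) (Fin.last (n+1)))) ^ 2
            ∂(ν.prod (Measure.pi fun _ => ν)) := by
          rw [← (hmp.symm (MeasurableEquiv.piFinSuccAbove (fun _ : Fin (n+2) => V) 0)).integral_comp'
            (fun x : Fin (n+2) → V =>
              ((∏ i : Fin (n+2), K (predPt u x i) (x i)) * f (x (Fin.last (n+1)))) ^ 2)]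
          refine integral_congr_ae (Filter.Eventually.of_forall fun p => ?_)
          simp only [hsymm]
      _ = ∫ v, (∫ y : Fin (n+1) → V,
            ((∏ i : Fin (n+2), K (predPt u (Fin.cons v y : Fin (n+2) → V) i) ((Fin.cons v y : Fin (n+2) → V) i))
              * f ((Fin.cons v y : Fin (n+2) → V) (Fin.last (n+1)))) ^ 2
            ∂(Measure.pi fun _ => ν)) ∂ν := integral_prod _ hHint
      _ ≤ ∫ v, K u v ^ 2 * (F ^ 2 * M ^ (n+1)) ∂ν := by
          refine integral_mono hHint.integral_prod_left
            (cont_integrable' ν (((hK.comp (Continuous.prodMk_right u)).pow 2).mul continuous_const))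
            fun v => ?_
          calc (∫ y : Fin (n+1) → V,
                  ((∏ i : Fin (n+2), K (predPt u (Fin.cons v y : Fin (n+2) → V) i) ((Fin.cons v y : Fin (n+2) → V) i))
                    * f ((Fin.cons v y : Fin (n+2) → V) (Fin.last (n+1)))) ^ 2 ∂(Measure.pi fun _ => ν))
              = K u v ^ 2 * ∫ y : Fin (n+1) → V,
                  ((∏ i : Fin (n+1), K (predPt v y i) (y i)) * f (y (Fin.last n))) ^ 2
                  ∂(Measure.pi fun _ => ν) := by
                simp_rw [hrw v]
                exact integral_const_mul _ _
            _ ≤ K u v ^ 2 * (F ^ 2 * M ^ (n+1)) :=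
                mul_le_mul_of_nonneg_left (ih v) (sq_nonneg _)
      _ = (∫ v, K u v ^ 2 ∂ν) * (F ^ 2 * M ^ (n+1)) := integral_mul_const _ _
      _ ≤ M * (F ^ 2 * M ^ (n+1)) := mul_le_mul_of_nonneg_right (KleM ν hK u)
            (mul_nonneg (sq_nonneg _) (pow_nonneg hMn _))
      _ = F ^ 2 * M ^ (n+1+1) := by ring
end key

/-- Variance (second moment) bound via the Kronecker square `K^{[2]}` (with kernel
`K²(u,v)`, whose operator norm on `C(V)` is `sup_u ∫ K(u,v)² ν(dv)`):
`E[L_n(u,θ_n)²] ≤ ‖f‖² ‖|K^{[2]}|‖^n` where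
`L_n(u,θ_n) = K(u,γ(1)) K(γ(1),γ(2)) ⋯ K(γ(n-1),γ(n)) f(γ(n))`
and the `γ(i)` are i.i.d. with law `ν`. -/
theorem kronecker_square_second_moment_bound
    {V Ω : Type*} [MetricSpace V] [CompactSpace V] [Nonempty V]
    [MeasurableSpace V] [BorelSpace V] [MeasurableSpace Ω]
    (μ : Measure Ω) [IsProbabilityMeasure μ]
    (ν : Measure V) [IsProbabilityMeasure ν]
    (K : V → V → ℝ) (hK : Continuous fun p : V × V => K p.1 p.2)
    (f : V → ℝ) (hf : Continuous f) (n : ℕ)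
    (γ : Fin (n + 1) → Ω → V) (hmeas : ∀ i, Measurable (γ i))
    (hindep : ProbabilityTheory.iIndepFun γ μ)
    (hlaw : ∀ i, μ.map (γ i) = ν) (u : V) :
    (∫ ω,
        ((∏ i : Fin (n + 1),
            K (if h : (i : ℕ) = 0 then u
               else γ ⟨(i : ℕ) - 1, by have := i.isLt; omega⟩ ω) (γ i ω))
          * f (γ (Fin.last n) ω)) ^ 2 ∂μ)
      ≤ (⨆ v : V, |f v|) ^ 2 * (⨆ w : V, ∫ v, (K w v) ^ 2 ∂ν) ^ (n + 1) := by
  have hg : Measurable fun ω => (fun i => γ i ω) := measurable_pi_lambda _ hmeas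
  have hmap : μ.map (fun ω i => γ i ω) = Measure.pi fun _ : Fin (n+1) => ν := by
    refine (Measure.pi_eq fun s hs => ?_).symm
    rw [Measure.map_apply hg (MeasurableSet.univ_pi hs)]
    have hpre : (fun ω i => γ i ω) ⁻¹' Set.pi Set.univ s = ⋂ i ∈ Finset.univ, γ i ⁻¹' s i := by
      ext ω; simp [Set.mem_pi]
    rw [hpre, hindep.measure_inter_preimage_eq_mul Finset.univ (fun i _ => hs i)]
    refine Finset.prod_congr rfl fun i _ => ?_
    rw [← hlaw i, Measure.map_apply (hmeas i) (hs i)]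
  have hGc := contG hK hf n u
  refine le_trans (le_of_eq ?_) (key ν hK hf n u)
  rw [← hmap, integral_map hg.aemeasurable hGc.aestronglyMeasurable]
  rfl
end

section
/- As z → 1⁻, the function G_{1/2}(z) = Σ_{n=1}^∞ √n · z^n satisfies G_{1/2}(z) ∼ (√π/2) · |ln z|^{−3/2}, i.e. the ratio G_{1/2}(z) / ((√π/2)(−ln z)^{−3/2}) tends to 1 as z → 1 from below. -/
open Filter Set MeasureTheory

namespace GHalfAux

noncomputable def f (t x : ℝ) : ℝ := Real.sqrt x * Real.exp (-(t * x))

lemma f_nonneg (t x : ℝ) : 0 ≤ f t x := mul_nonneg (Real.sqrt_nonneg x) (Real.exp_pos _).le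

lemma f_cont (t : ℝ) : Continuous (f t) := by
  unfold f; fun_prop

lemma sqrt_le_exp {u : ℝ} (hu : 0 ≤ u) : Real.sqrt u ≤ Real.exp u := by
  have h1 : Real.sqrt u ≤ 1 + u := by
    nlinarith [Real.sq_sqrt hu, Real.sqrt_nonneg u]
  linarith [Real.add_one_le_exp u]

lemma f_le {t : ℝ} (ht : 0 < t) (x : ℝ) : f t x ≤ t ^ (-(1/2) : ℝ) := by
  have hM : (0:ℝ) < t ^ (-(1/2) : ℝ) := Real.rpow_pos_of_pos ht _
  rcases le_or_gt x 0 with hx | hx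
  · have h0 : f t x = 0 := by
      simp [f, Real.sqrt_eq_zero_of_nonpos hx]
    rw [h0]; exact hM.le
  · have key : Real.sqrt t * f t x ≤ 1 := by
      have h1 : Real.sqrt t * Real.sqrt x = Real.sqrt (t * x) :=
        (Real.sqrt_mul ht.le x).symm
      have h2 : Real.sqrt (t * x) ≤ Real.exp (t * x) :=
        sqrt_le_exp (by positivity)
      have h3 : Real.exp (t*x) * Real.exp (-(t*x)) = 1 := by
        rw [← Real.exp_add]; simp
      calc Real.sqrt t * f t x = Real.sqrt (t*x) * Real.exp (-(t*x)) := by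
            rw [f, ← mul_assoc, h1]
        _ ≤ Real.exp (t*x) * Real.exp (-(t*x)) :=
            mul_le_mul_of_nonneg_right h2 (Real.exp_pos _).le
        _ = 1 := h3
    have hst : 0 < Real.sqrt t := Real.sqrt_pos.2 ht
    have hMeq : t ^ (-(1/2) : ℝ) = (Real.sqrt t)⁻¹ := by
      rw [Real.rpow_neg ht.le, Real.sqrt_eq_rpow]
    rw [hMeq, ← one_div, le_div_iff₀ hst]
    linarith [key]


lemma f_hasDeriv (t : ℝ) {x : ℝ} (hx : 0 < x) :
    HasDerivAt (f t) (Real.exp (-(t*x)) * (1/(2*Real.sqrt x) - t * Real.sqrt x)) x := by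
  have h1 : HasDerivAt Real.sqrt (1/(2*Real.sqrt x)) x := Real.hasDerivAt_sqrt hx.ne'
  have h2 : HasDerivAt (fun y : ℝ => -(t*y)) (-t) x := by
    have := ((hasDerivAt_id x).const_mul t).neg
    simp only [mul_one] at this
    exact this
  have h3 := h2.exp
  have h4 := h1.mul h3
  exact h4.congr_deriv (by ring)

lemma f_mono {t : ℝ} (ht : 0 < t) : MonotoneOn (f t) (Icc 0 (1/(2*t))) := by
  apply monotoneOn_of_deriv_nonneg (convex_Icc _ _) (f_cont t).continuousOn
  · rw [interior_Icc]
    exact fun x hx => ((f_hasDeriv t hx.1).differentiableAt).differentiableWithinAt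
  · rw [interior_Icc]
    intro x hx
    rw [(f_hasDeriv t hx.1).deriv]
    have hs : 0 < Real.sqrt x := Real.sqrt_pos.2 hx.1
    have hle : t * Real.sqrt x ≤ 1/(2*Real.sqrt x) := by
      rw [le_div_iff₀ (by positivity)]
      have hx2 : x * (2*t) < 1 := (lt_div_iff₀ (by positivity)).1 hx.2
      nlinarith [Real.sq_sqrt hx.1.le]
    have := (Real.exp_pos (-(t*x))).le
    nlinarith

lemma f_anti {t : ℝ} (ht : 0 < t) {c : ℝ} (hc : 1/(2*t) ≤ c) (hc0 : 0 < c) :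
    AntitoneOn (f t) (Ici c) := by
  apply antitoneOn_of_deriv_nonpos (convex_Ici _) (f_cont t).continuousOn
  · rw [interior_Ici]
    exact fun x hx => ((f_hasDeriv t (lt_trans hc0 hx)).differentiableAt).differentiableWithinAt
  · rw [interior_Ici]
    intro x hx
    have hx0 : 0 < x := lt_trans hc0 hx
    rw [(f_hasDeriv t hx0).deriv]
    have hs : 0 < Real.sqrt x := Real.sqrt_pos.2 hx0
    have hle : 1/(2*Real.sqrt x) ≤ t * Real.sqrt x := by
      rw [div_le_iff₀ (by positivity)]
      have hcx : 1/(2*t) ≤ x := le_of_lt (lt_of_le_of_lt hc hx)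
      rw [div_le_iff₀ (by positivity)] at hcx
      nlinarith [Real.sq_sqrt hx0.le]
    have := (Real.exp_pos (-(t*x))).le
    nlinarith


lemma summable_g {t : ℝ} (ht : 0 < t) : Summable (fun n : ℕ => f t ((n:ℝ) + 1)) := by
  have hr : ‖Real.exp (-t)‖ < 1 := by
    rw [Real.norm_eq_abs, abs_of_pos (Real.exp_pos _)]
    exact Real.exp_lt_one_iff.2 (neg_neg_iff_pos.2 ht)
  have h := summable_pow_mul_geometric_of_norm_lt_one 1 hr
  have h' := (_root_.summable_nat_add_iff 1).2 h
  apply Summable.of_nonneg_of_le (fun n => f_nonneg _ _) _ h'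
  intro n
  have h1 : Real.sqrt ((n:ℝ)+1) ≤ (n:ℝ)+1 := by
    nlinarith [Real.sq_sqrt (show (0:ℝ) ≤ (n:ℝ)+1 by positivity),
      Real.sqrt_nonneg ((n:ℝ)+1), sq_nonneg (Real.sqrt ((n:ℝ)+1) - 1)]
  have h2 : Real.exp (-(t * ((n:ℝ)+1))) = Real.exp (-t) ^ (n+1) := by
    rw [← Real.exp_nat_mul]
    congr 1
    push_cast
    ring
  calc f t ((n:ℝ)+1) = Real.sqrt ((n:ℝ)+1) * Real.exp (-(t*((n:ℝ)+1))) := rfl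
    _ ≤ ((n:ℝ)+1) * Real.exp (-t) ^ (n+1) := by
        rw [h2]
        exact mul_le_mul_of_nonneg_right h1 (by positivity)
    _ = ((n+1:ℕ):ℝ)^1 * Real.exp (-t) ^ (n+1) := by push_cast; ring

lemma f_integrableOn {t : ℝ} (ht : 0 < t) : IntegrableOn (f t) (Ioi 0) := by
  have h := integrableOn_rpow_mul_exp_neg_mul_rpow (by norm_num : (-1:ℝ) < 1/2)
    (by norm_num : (0:ℝ) < 1) ht
  apply h.congr_fun _ measurableSet_Ioi
  intro x hx
  simp only [f, Real.sqrt_eq_rpow, Real.rpow_one]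
  ring_nf

lemma f_integral {t : ℝ} (ht : 0 < t) :
    ∫ x in Ioi (0:ℝ), f t x = Real.Gamma (3/2) * t ^ (-(3/2) : ℝ) := by
  have h := Real.integral_rpow_mul_exp_neg_mul_Ioi (show (0:ℝ) < 3/2 by norm_num) ht
  have heq : ∀ x ∈ Ioi (0:ℝ), f t x = x ^ ((3:ℝ)/2 - 1) * Real.exp (-(t * x)) := by
    intro x hx
    rw [f, Real.sqrt_eq_rpow]
    norm_num
  rw [setIntegral_congr_fun measurableSet_Ioi heq, h, one_div,
    ← Real.rpow_neg_one t, ← Real.rpow_mul ht.le]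
  norm_num [mul_comm]


lemma key {t : ℝ} (ht : 0 < t) :
    |(∑' n : ℕ, f t ((n:ℝ) + 1)) - Real.Gamma (3/2) * t ^ (-(3/2) : ℝ)| ≤
      2 * t ^ (-(1/2) : ℝ) := by
  set M := t ^ (-(1/2):ℝ) with hMdef
  have hM0 : 0 ≤ M := (Real.rpow_pos_of_pos ht _).le
  set n₀ := ⌊1/(2*t)⌋₊ with hn₀def
  set c : ℝ := (n₀:ℝ) + 1 with hcdef
  have hn₀ : (n₀:ℝ) ≤ 1/(2*t) := Nat.floor_le (by positivity)
  have hn₀' : 1/(2*t) < c := by rw [hcdef, hn₀def]; push_cast; exact Nat.lt_floor_add_one _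
  have hc0 : (0:ℝ) < c := by positivity
  have hanti : AntitoneOn (f t) (Ici c) := f_anti ht hn₀'.le hc0
  have hg : Summable (fun n : ℕ => f t ((n:ℝ) + 1)) := summable_g ht
  set S := ∑' n : ℕ, f t ((n:ℝ)+1) with hSdef
  have hInt : IntegrableOn (f t) (Ioi 0) := f_integrableOn ht
  have hIntc : IntegrableOn (f t) (Ioi c) := hInt.mono_set (Ioi_subset_Ioi hc0.le)
  have hII : ∀ a b : ℝ, IntervalIntegrable (f t) volume a b :=
    fun a b => (f_cont t).intervalIntegrable a b
  -- (A) lower bound on head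
  have hA : ∫ x in (0:ℝ)..(n₀:ℝ), f t x ≤ ∑ i ∈ Finset.range n₀, f t ((i:ℝ)+1) := by
    have hmono : MonotoneOn (f t) (Icc (0:ℝ) (0 + (n₀:ℕ))) := by
      apply (f_mono ht).mono
      apply Icc_subset_Icc le_rfl
      simpa using hn₀
    have := hmono.integral_le_sum
    simpa using this
  -- (B) upper bound on head
  have hB : ∑ i ∈ Finset.range n₀, f t ((i:ℝ)+1) ≤ (∫ x in (0:ℝ)..(n₀:ℝ), f t x) + M := by
    have hmono : MonotoneOn (f t) (Icc (0:ℝ) (0 + (n₀:ℕ))) := by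
      apply (f_mono ht).mono
      apply Icc_subset_Icc le_rfl
      simpa using hn₀
    have h1 := hmono.sum_le_integral
    simp only [zero_add] at h1
    have e3 := Finset.sum_range_succ' (fun i : ℕ => f t (i:ℝ)) n₀
    rw [Finset.sum_range_succ] at e3
    push_cast at e3
    have e1 : (∑ i ∈ Finset.range n₀, f t ((i:ℝ)+1)) + f t 0
        = (∑ i ∈ Finset.range n₀, f t (i:ℝ)) + f t (n₀:ℝ) := e3.symm
    have hf0 : f t 0 = 0 := by simp [f]
    have hfn₀ : f t (n₀:ℝ) ≤ M := f_le ht _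
    rw [hf0, add_zero] at e1
    linarith
  -- summable tails
  have hT1sum : Summable (fun n : ℕ => f t ((n:ℝ)+c)) := by
    have := (_root_.summable_nat_add_iff n₀).2 hg
    apply this.congr
    intro n
    congr 1
    push_cast
    ring
  have hT2sum : Summable (fun n : ℕ => f t ((n:ℝ)+c+1)) := by
    have := (_root_.summable_nat_add_iff (n₀+1)).2 hg
    apply this.congr
    intro n
    congr 1
    push_cast
    ring
  have htend : Tendsto (fun N : ℕ => ∫ x in c..(c + (N:ℝ)), f t x) atTop
      (nhds (∫ x in Ioi c, f t x)) :=
    intervalIntegral_tendsto_integral_Ioi c hIntc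
      (tendsto_atTop_add_const_left atTop c tendsto_natCast_atTop_atTop)
  -- (C) lower tail
  have hC : ∫ x in Ioi c, f t x ≤ ∑' n : ℕ, f t ((n:ℝ)+c) := by
    refine le_of_tendsto_of_tendsto' htend hT1sum.hasSum.tendsto_sum_nat (fun N => ?_)
    have hanti' : AntitoneOn (f t) (Icc c (c + (N:ℕ))) :=
      hanti.mono (Icc_subset_Ici_self)
    have := hanti'.integral_le_sum
    refine this.trans (le_of_eq ?_)
    apply Finset.sum_congr rfl
    intro i _
    congr 1
    push_cast
    ring
  -- (D) upper tail
  have hD : ∑' n : ℕ, f t ((n:ℝ)+c+1) ≤ ∫ x in Ioi c, f t x := by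
    refine le_of_tendsto_of_tendsto' hT2sum.hasSum.tendsto_sum_nat htend (fun N => ?_)
    have hanti' : AntitoneOn (f t) (Icc c (c + (N:ℕ))) :=
      hanti.mono (Icc_subset_Ici_self)
    have := hanti'.sum_le_integral
    refine le_trans (le_of_eq ?_) this
    apply Finset.sum_congr rfl
    intro i _
    congr 1
    push_cast
    ring
  -- (E) integral splitting
  have hE : (∫ x in (0:ℝ)..(n₀:ℝ), f t x) + (∫ x in (n₀:ℝ)..c, f t x)
      + (∫ x in Ioi c, f t x) = ∫ x in Ioi (0:ℝ), f t x := by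
    rw [intervalIntegral.integral_add_adjacent_intervals (hII 0 n₀) (hII n₀ c),
      intervalIntegral.integral_of_le hc0.le]
    rw [← setIntegral_union (Ioc_disjoint_Ioi le_rfl) measurableSet_Ioi
      (hInt.mono_set (fun x hx => hx.1)) hIntc, Ioc_union_Ioi_eq_Ioi hc0.le]
  -- (F) middle integral bounds
  have hn₀c : (n₀:ℝ) ≤ c := by rw [hcdef]; linarith
  have hF1 : ∫ x in (n₀:ℝ)..c, f t x ≤ M := by
    calc ∫ x in (n₀:ℝ)..c, f t x ≤ ∫ _x in (n₀:ℝ)..c, M :=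
          intervalIntegral.integral_mono_on hn₀c (hII _ _)
            intervalIntegrable_const (fun x _ => f_le ht x)
      _ = M := by
          rw [intervalIntegral.integral_const, hcdef]
          simp
  have hF2 : 0 ≤ ∫ x in (n₀:ℝ)..c, f t x :=
    intervalIntegral.integral_nonneg hn₀c (fun x _ => f_nonneg t x)
  -- (G) sum decompositions
  have hs1 : (∑ i ∈ Finset.range n₀, f t ((i:ℝ)+1)) + (∑' n : ℕ, f t ((n:ℝ)+c)) = S := by
    have h : (∑ i ∈ Finset.range n₀, f t ((i:ℝ)+1))
        + (∑' (i:ℕ), f t (((i+n₀:ℕ):ℝ)+1)) = S :=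
      Summable.sum_add_tsum_nat_add n₀ hg
    rw [← h]
    congr 1
    apply tsum_congr
    intro n
    congr 1
    push_cast
    ring
  have hs2 : (∑ i ∈ Finset.range n₀, f t ((i:ℝ)+1)) + f t c
      + (∑' n : ℕ, f t ((n:ℝ)+c+1)) = S := by
    have h : (∑ i ∈ Finset.range (n₀+1), f t ((i:ℝ)+1))
        + (∑' (i:ℕ), f t (((i+(n₀+1):ℕ):ℝ)+1)) = S :=
      Summable.sum_add_tsum_nat_add (n₀+1) hg
    rw [← h, Finset.sum_range_succ]
    have e : (∑' (n:ℕ), f t ((n:ℝ)+c+1)) = ∑' (i:ℕ), f t (((i+(n₀+1):ℕ):ℝ)+1) :=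
      tsum_congr fun n => by congr 1; push_cast; ring
    rw [e, hcdef]
  have hfc : f t c ≤ M := f_le ht _
  rw [← f_integral ht, ← hE]
  rw [abs_le]
  constructor
  · linarith
  · linarith

lemma ratio_tendsto : Tendsto
    (fun t : ℝ => (∑' n : ℕ, f t ((n:ℝ)+1)) / (Real.Gamma (3/2) * t ^ (-(3/2):ℝ)))
    (nhdsWithin 0 (Ioi 0)) (nhds 1) := by
  have hGpos : 0 < Real.Gamma (3/2) := Real.Gamma_pos_of_pos (by norm_num)
  set C := Real.Gamma (3/2) with hCdef
  have hzero : Tendsto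
      (fun t : ℝ => (∑' n : ℕ, f t ((n:ℝ)+1)) / (C * t ^ (-(3/2):ℝ)) - 1)
      (nhdsWithin 0 (Ioi 0)) (nhds 0) := by
    apply squeeze_zero_norm' (a := fun t => (2/C) * t)
    · filter_upwards [self_mem_nhdsWithin] with t ht
      have ht : (0:ℝ) < t := ht
      have hD : 0 < C * t ^ (-(3/2):ℝ) := by positivity
      have heq : (∑' n : ℕ, f t ((n:ℝ)+1)) / (C * t ^ (-(3/2):ℝ)) - 1
          = ((∑' n : ℕ, f t ((n:ℝ)+1)) - C * t ^ (-(3/2):ℝ)) / (C * t ^ (-(3/2):ℝ)) := by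
        field_simp
      rw [Real.norm_eq_abs, heq, abs_div, abs_of_pos hD, div_le_iff₀ hD]
      have hpow : t ^ (-(1/2):ℝ) = t * t ^ (-(3/2):ℝ) := by
        rw [show (-(1/2):ℝ) = 1 + (-(3/2)) by norm_num, Real.rpow_add ht, Real.rpow_one]
      calc |(∑' n : ℕ, f t ((n:ℝ)+1)) - C * t ^ (-(3/2):ℝ)|
          ≤ 2 * t ^ (-(1/2):ℝ) := key ht
        _ = 2/C * t * (C * t ^ (-(3/2):ℝ)) := by
            rw [hpow]
            field_simp
    · have h0 : Tendsto (fun t : ℝ => (2/C) * t) (nhds 0) (nhds 0) := by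
        have := (continuous_mul_left (2/C)).tendsto (0:ℝ)
        simpa using this
      exact h0.mono_left nhdsWithin_le_nhds
  have := hzero.add (tendsto_const_nhds (x := (1:ℝ)))
  simpa using this

end GHalfAux

open GHalfAux in
/-- As `z → 1⁻`, `G_{1/2}(z) = Σ_{n≥1} √n z^n ∼ (√π/2) |ln z|^{-3/2}`. -/
theorem G_half_asymptotic :
    Tendsto
      (fun z : ℝ =>
        (∑' n : ℕ, Real.sqrt ((n : ℝ) + 1) * z ^ (n + 1)) /
          (Real.sqrt Real.pi / 2 * (-Real.log z) ^ (-(3 / 2) : ℝ)))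
      (nhdsWithin 1 (Set.Ioo (0 : ℝ) 1)) (nhds 1) := by
  have hG : Real.Gamma (3/2) = Real.sqrt Real.pi / 2 := by
    rw [show (3/2:ℝ) = 1/2 + 1 by norm_num, Real.Gamma_add_one (by norm_num),
      Real.Gamma_one_half_eq]
    ring
  have hlog : Tendsto (fun z : ℝ => -Real.log z) (nhdsWithin 1 (Set.Ioo (0:ℝ) 1))
      (nhdsWithin 0 (Ioi 0)) := by
    apply tendsto_nhdsWithin_of_tendsto_nhds_of_eventually_within
    · have h1 : Tendsto (fun z : ℝ => -Real.log z) (nhds 1) (nhds (-Real.log 1)) :=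
        ((Real.continuousAt_log (by norm_num)).neg).tendsto
      rw [Real.log_one, neg_zero] at h1
      exact h1.mono_left nhdsWithin_le_nhds
    · filter_upwards [self_mem_nhdsWithin] with z hz
      exact neg_pos.2 (Real.log_neg hz.1 hz.2)
  have hcomp := ratio_tendsto.comp hlog
  apply hcomp.congr'
  filter_upwards [self_mem_nhdsWithin] with z hz
  simp only [Function.comp]
  have hnum : (∑' n : ℕ, f (-Real.log z) ((n:ℝ)+1))
      = ∑' n : ℕ, Real.sqrt ((n : ℝ) + 1) * z ^ (n + 1) := by
    apply tsum_congr
    intro n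
    rw [f]
    congr 1
    have harg : -(-Real.log z * ((n:ℝ)+1)) = ((n+1:ℕ):ℝ) * Real.log z := by
      push_cast; ring
    rw [harg, Real.exp_nat_mul, Real.exp_log hz.1]
  rw [hnum, hG]
end

section
/- For β ∈ (0,1), α = 1−β, and continuous K, f on [0,T]² and [0,T] respectively, the n-th term of the Neumann series for the weakly singular Volterra equation satisfies |y_n(t)| ≤ ‖f‖·‖K‖^n · (λ t^β)^n · Γ(β)^n / Γ(1+nβ), where y_n(t) = λ^n ∫_0^t ∫_0^{s_1} ⋯ ∫_0^{s_{n-1}} K(t,s_1)⋯K(s_{n-1},s_n) f(s_n) / [(t−s_1)(s_1−s_2)⋯(s_{n-1}−s_n)]^α ds_n⋯ds_1; consequently the Neumann series Σ_n y_n(t) converges absolutely for every λ > 0 and t ∈ [0,T]. -/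
set_option maxHeartbeats 1600000

open MeasureTheory

/-- The `n`-th term of the Neumann series for the weakly singular Volterra equation:
`y_n(t) = λ^n ∫_0^t ⋯ ∫_0^{s_{n-1}} K(t,s_1)⋯K(s_{n-1},s_n) f(s_n)
  / [(t-s_1)(s_1-s_2)⋯(s_{n-1}-s_n)]^α ds`, written as an integral over the
ordered simplex `{0 < s_n < ⋯ < s_1 < t}` (for `n = 0`, `y_0(t) = f(t)`). -/
noncomputable def singularNeumannTerm (lam β : ℝ) (K : ℝ → ℝ → ℝ) (f : ℝ → ℝ)
    (t : ℝ) (n : ℕ) : ℝ :=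
  lam ^ n *
    ∫ s in {s : Fin n → ℝ | StrictAnti s ∧ ∀ i, s i ∈ Set.Ioo 0 t},
      (∏ i : Fin n,
          (K (if h : (i : ℕ) = 0 then t else s ⟨(i : ℕ) - 1, by have := i.isLt; omega⟩)
             (s i)
           * ((if h : (i : ℕ) = 0 then t else s ⟨(i : ℕ) - 1, by have := i.isLt; omega⟩)
               - s i) ^ (-(1 - β))))
        * f (if h : n = 0 then t else s ⟨n - 1, by omega⟩)

namespace SNB

open Set intervalIntegral Filter



noncomputable def P (β : ℝ) (n : ℕ) (a : ℝ) (s : Fin n → ℝ) : ℝ :=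
  ∏ i : Fin n,
    ((if h : (i : ℕ) = 0 then a else s ⟨(i : ℕ) - 1, by have := i.isLt; omega⟩) - s i)
      ^ (β - 1)

def S (n : ℕ) (a : ℝ) : Set (Fin n → ℝ) :=
  {s | StrictAnti s ∧ ∀ i, s i ∈ Set.Ioo 0 a}

lemma measurableSet_S (n : ℕ) (a : ℝ) : MeasurableSet (S n a) := by
  have h1 : {s : Fin n → ℝ | StrictAnti s}
      = ⋂ i, ⋂ j, ⋂ (_ : i < j), {s : Fin n → ℝ | s j < s i} := by
    ext s; simp [StrictAnti]
  have h1m : MeasurableSet {s : Fin n → ℝ | StrictAnti s} := by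
    rw [h1]
    exact .iInter fun i => .iInter fun j => .iInter fun _ =>
      measurableSet_lt (measurable_pi_apply _) (measurable_pi_apply _)
  have h2m : MeasurableSet (⋂ i, {s : Fin n → ℝ | s i ∈ Set.Ioo 0 a}) :=
    .iInter fun i => (measurable_pi_apply i) measurableSet_Ioo
  have : S n a = {s : Fin n → ℝ | StrictAnti s} ∩ ⋂ i, {s | s i ∈ Set.Ioo 0 a} := by
    ext s; simp [S, forall_and]
  rw [this]
  exact h1m.inter h2m

lemma cons_pos {n : ℕ} (x : ℝ) (y : Fin n → ℝ) (k : Fin (n+1)) (hk : (k:ℕ) ≠ 0) :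
    Fin.cons (α := fun _ => ℝ) x y k = y ⟨(k:ℕ)-1, by have := k.isLt; omega⟩ := by
  rcases k with ⟨kv, hkv⟩
  obtain ⟨m, rfl⟩ : ∃ m, kv = m + 1 := ⟨kv - 1, by simp at hk; omega⟩
  simp only [Fin.cons, Fin.cases_succ']
  rfl

lemma P_cons (β : ℝ) (n : ℕ) (a x : ℝ) (y : Fin n → ℝ) :
    P β (n+1) a (Fin.cons x y) = (a - x) ^ (β - 1) * P β n x y := by
  show (∏ i : Fin (n+1), _) = _
  rw [Fin.prod_univ_succ]
  refine congrArg₂ (· * ·) (by simp) (Finset.prod_congr rfl fun j _ => ?_)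
  have hjs : ((j.succ : Fin (n+1)) : ℕ) ≠ 0 := by simp
  rw [dif_neg hjs, Fin.cons_succ]
  congr 2
  rcases Nat.eq_zero_or_pos (j : ℕ) with hj | hj
  · rw [dif_pos hj]
    have h0 : (⟨(j.succ : ℕ) - 1, by omega⟩ : Fin (n+1)) = 0 := by
      apply Fin.ext; simp [hj]
    rw [h0, Fin.cons_zero]
  · rw [dif_neg (by omega : (j:ℕ) ≠ 0), cons_pos x y _ (by simp; omega)]
    exact congrArg y (by apply Fin.ext; simp)

lemma mem_S_cons {n : ℕ} {a x : ℝ} {y : Fin n → ℝ} :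
    Fin.cons x y ∈ S (n+1) a ↔ x ∈ Set.Ioo 0 a ∧ y ∈ S n x := by
  constructor
  · rintro ⟨hanti, hmem⟩
    refine ⟨by simpa using hmem 0, fun i j hij => ?_, fun j => ?_⟩
    · have := hanti (show (i.succ : Fin (n+1)) < j.succ by simpa using hij)
      simpa using this
    · have h1 := hanti (show (0 : Fin (n+1)) < j.succ from Fin.succ_pos j)
      have h2 := hmem j.succ
      simp only [Fin.cons_succ, Fin.cons_zero] at h1 h2
      exact ⟨h2.1, h1⟩
  · rintro ⟨hx, hanti, hmem⟩
    constructor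
    · intro i j hij
      have hj : (j : ℕ) ≠ 0 := by
        have : (i:ℕ) < (j:ℕ) := hij
        omega
      rw [cons_pos x y j hj]
      rcases Nat.eq_zero_or_pos (i : ℕ) with hi | hi
      · have : i = 0 := Fin.ext hi
        subst this
        rw [Fin.cons_zero]
        exact (hmem _).2
      · rw [cons_pos x y i (by omega)]
        apply hanti
        have hij' : (i:ℕ) < (j:ℕ) := hij
        simp only [Fin.lt_iff_val_lt_val]
        omega
    · intro j
      rcases Nat.eq_zero_or_pos (j : ℕ) with hj | hj
      · have : j = 0 := Fin.ext hj
        subst this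
        rw [Fin.cons_zero]; exact hx
      · rw [cons_pos x y j (by omega)]
        exact ⟨(hmem _).1, (hmem _).2.trans hx.2⟩

lemma S_zero (a : ℝ) : S 0 a = Set.univ := by
  ext s
  simp [S, StrictAnti]

lemma P_pos_on {β : ℝ} {n : ℕ} {a : ℝ} {s : Fin n → ℝ} (hs : s ∈ S n a) :
    0 < P β n a s := by
  apply Finset.prod_pos
  intro i _
  apply Real.rpow_pos_of_pos
  rcases Nat.eq_zero_or_pos (i : ℕ) with hi | hi
  · rw [dif_pos hi]
    have := (hs.2 i).2
    linarith
  · rw [dif_neg (by omega : (i:ℕ) ≠ 0)]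
    apply sub_pos.mpr
    apply hs.1
    show ((i:ℕ) - 1 : ℕ) < (i:ℕ)
    omega




lemma real_beta {u v : ℝ} (hu : 0 < u) (hv : 0 < v) :
    ∫ x in (0:ℝ)..1, x ^ (u-1) * (1-x) ^ (v-1)
      = Real.Gamma u * Real.Gamma v / Real.Gamma (u+v) := by
  have h := Complex.Gamma_mul_Gamma_eq_betaIntegral (s := (u:ℂ)) (t := (v:ℂ))
    (by simpa using hu) (by simpa using hv)
  have hbeta : Complex.betaIntegral u v
      = ((∫ x in (0:ℝ)..1, x ^ (u-1) * (1-x) ^ (v-1) : ℝ) : ℂ) := by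
    rw [Complex.betaIntegral, ← intervalIntegral.integral_ofReal]
    apply intervalIntegral.integral_congr
    intro x hx
    rw [Set.uIcc_of_le (by norm_num : (0:ℝ) ≤ 1)] at hx
    dsimp only
    have h1 : (x:ℂ) ^ ((u:ℂ)-1) = ((x ^ (u-1) : ℝ) : ℂ) := by
      rw [show ((u:ℂ)-1) = ((u-1:ℝ):ℂ) by push_cast; ring, ← Complex.ofReal_cpow hx.1]
    have h2 : (1-(x:ℂ)) ^ ((v:ℂ)-1) = (((1-x) ^ (v-1) : ℝ) : ℂ) := by
      rw [show ((v:ℂ)-1) = ((v-1:ℝ):ℂ) by push_cast; ring,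
        show (1-(x:ℂ)) = (((1-x:ℝ)):ℂ) by push_cast; ring,
        ← Complex.ofReal_cpow (by linarith [hx.2])]
    rw [h1, h2, ← Complex.ofReal_mul]
  rw [hbeta, ← Complex.ofReal_add, Complex.Gamma_ofReal, Complex.Gamma_ofReal,
    Complex.Gamma_ofReal, ← Complex.ofReal_mul, ← Complex.ofReal_mul] at h
  have h' := Complex.ofReal_inj.mp h
  have hpos : 0 < Real.Gamma (u+v) := Real.Gamma_pos_of_pos (by linarith)
  field_simp [hpos.ne'] at h' ⊢
  linarith [h']

lemma beta_integrable {a β γ : ℝ} (ha : 0 < a) (hβ : 0 < β) (hγ : 0 ≤ γ) :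
    IntegrableOn (fun x => (a-x) ^ (β-1) * x ^ γ) (Set.Ioo 0 a) := by
  have hbase : IntervalIntegrable (fun x : ℝ => x ^ (β-1)) volume 0 a :=
    intervalIntegral.intervalIntegrable_rpow' (by linarith)
  have h2 : IntervalIntegrable (fun x : ℝ => (a-x) ^ (β-1)) volume 0 a := by
    have := (hbase.comp_sub_left a).symm
    simpa using this
  have h3 : IntegrableOn (fun x : ℝ => (a-x) ^ (β-1)) (Set.Ioo 0 a) := by
    have := (intervalIntegrable_iff_integrableOn_Ioc_of_le ha.le).mp h2
    exact this.mono_set Set.Ioo_subset_Ioc_self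
  have hb : IntegrableOn (fun x : ℝ => x ^ γ * (a-x) ^ (β-1)) (Set.Ioo 0 a) := by
    refine Integrable.bdd_mul (𝕜 := ℝ) (c := a ^ γ + 1) h3 ?_ ?_
    · exact (Measurable.aestronglyMeasurable (by fun_prop))
    · filter_upwards [ae_restrict_mem measurableSet_Ioo] with x hx
      rw [Real.norm_eq_abs, abs_of_nonneg (Real.rpow_nonneg hx.1.le _)]
      have : x ^ γ ≤ a ^ γ := Real.rpow_le_rpow hx.1.le hx.2.le hγ
      linarith
  exact hb.congr_fun (fun x _ => by ring) measurableSet_Ioo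

lemma beta_value {a β γ : ℝ} (ha : 0 < a) (hβ : 0 < β) (hγ : 0 ≤ γ) :
    ∫ x in Set.Ioo 0 a, (a-x) ^ (β-1) * x ^ γ
      = a ^ (β+γ) * (Real.Gamma (γ+1) * Real.Gamma β / Real.Gamma (γ+1+β)) := by
  have h0 : ∫ x in Set.Ioo 0 a, (a-x) ^ (β-1) * x ^ γ
      = ∫ x in (0:ℝ)..a, (a-x) ^ (β-1) * x ^ γ := by
    rw [intervalIntegral.integral_of_le ha.le, integral_Ioc_eq_integral_Ioo]
  have hsub : (∫ y in (0:ℝ)..1, (a - a*y) ^ (β-1) * (a*y) ^ γ)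
      = a⁻¹ • ∫ x in (0:ℝ)..a, (a-x) ^ (β-1) * x ^ γ := by
    have := intervalIntegral.integral_comp_mul_left
      (a := 0) (b := 1) (f := fun x => (a-x) ^ (β-1) * x ^ γ) (c := a) ha.ne'
    simpa using this
  have hcongr : (∫ y in (0:ℝ)..1, (a - a*y) ^ (β-1) * (a*y) ^ γ)
      = a ^ (β+γ-1) * ∫ y in (0:ℝ)..1, y ^ γ * (1-y) ^ (β-1) := by
    rw [← intervalIntegral.integral_const_mul]
    apply intervalIntegral.integral_congr
    intro y hy
    rw [Set.uIcc_of_le (by norm_num : (0:ℝ) ≤ 1)] at hy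
    dsimp only
    have h1 : a - a*y = a * (1-y) := by ring
    have h2 : a ^ (β+γ-1) = a ^ (β-1) * a ^ γ := by
      rw [← Real.rpow_add ha]; congr 1; ring
    rw [h1, Real.mul_rpow ha.le (by linarith [hy.2]), Real.mul_rpow ha.le hy.1, h2]
    ring
  have hbeta : (∫ y in (0:ℝ)..1, y ^ γ * (1-y) ^ (β-1))
      = Real.Gamma (γ+1) * Real.Gamma β / Real.Gamma (γ+1+β) := by
    have := real_beta (u := γ+1) (v := β) (by linarith) hβ
    simpa using this
  have ha' : a ^ (β+γ) = a * a ^ (β+γ-1) := by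
    have : a ^ (β+γ) = a ^ ((1:ℝ)+(β+γ-1)) := by congr 1; ring
    rw [this, Real.rpow_add ha, Real.rpow_one]
  rw [h0]
  have := hsub.symm
  rw [hcongr, hbeta] at this
  rw [smul_eq_mul] at this
  have h4 : (∫ x in (0:ℝ)..a, (a-x) ^ (β-1) * x ^ γ)
      = a * (a ^ (β+γ-1) * (Real.Gamma (γ+1) * Real.Gamma β / Real.Gamma (γ+1+β))) := by
    field_simp at this ⊢
    linarith [this]
  rw [h4, ha']
  ring


lemma measurable_strictAnti (n : ℕ) : MeasurableSet {s : Fin n → ℝ | StrictAnti s} := by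
  have h1 : {s : Fin n → ℝ | StrictAnti s}
      = ⋂ i, ⋂ j, ⋂ (_ : i < j), {s : Fin n → ℝ | s j < s i} := by
    ext s; simp [StrictAnti]
  rw [h1]
  exact .iInter fun i => .iInter fun j => .iInter fun _ =>
    measurableSet_lt (measurable_pi_apply _) (measurable_pi_apply _)

lemma measurable_P (β : ℝ) (n : ℕ) :
    Measurable (fun p : ℝ × (Fin n → ℝ) => P β n p.1 p.2) := by
  unfold P
  apply Finset.measurable_prod
  intro i _
  by_cases h : (i : ℕ) = 0
  · simp only [h, dif_pos]
    fun_prop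
  · simp only [dif_neg h]
    fun_prop

lemma keyP {β : ℝ} (hβ0 : 0 < β) (hβ1 : β < 1) (n : ℕ) :
    ∀ a : ℝ, 0 < a →
      IntegrableOn (P β n a) (S n a) ∧
      ∫ s in S n a, P β n a s
        = a ^ ((n:ℝ)*β) * Real.Gamma β ^ n / Real.Gamma (1+(n:ℝ)*β) := by
  induction n with
  | zero =>
    intro a ha
    have hP1 : P β 0 a = fun _ => (1:ℝ) := funext fun s => by simp [P]
    have hvol : (volume : Measure (Fin 0 → ℝ)) Set.univ = 1 := by
      simp [volume_pi, Measure.pi_univ]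
    rw [S_zero, hP1]
    constructor
    · rw [IntegrableOn, Measure.restrict_univ]
      have : IsFiniteMeasure (volume : Measure (Fin 0 → ℝ)) :=
        ⟨by rw [hvol]; exact ENNReal.one_lt_top⟩
      exact integrable_const 1
    · rw [Measure.restrict_univ, MeasureTheory.integral_const, measureReal_def, hvol]
      simp [Real.Gamma_one]
  | succ n IH =>
    intro a ha
    set γ : ℝ := (n:ℝ) * β with hγdef
    have hγ : 0 ≤ γ := by positivity
    set Cn : ℝ := Real.Gamma β ^ n / Real.Gamma (1+(n:ℝ)*β) with hCndef
    have hCn : 0 ≤ Cn := by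
      apply div_nonneg (pow_nonneg (Real.Gamma_pos_of_pos hβ0).le _)
      exact (Real.Gamma_pos_of_pos (by positivity)).le
    set A : Set (ℝ × (Fin n → ℝ)) := {p | p.1 ∈ Set.Ioo 0 a ∧ p.2 ∈ S n p.1} with hAdef
    have hA : MeasurableSet A := by
      have : A = {p : ℝ × (Fin n → ℝ) | p.1 ∈ Set.Ioo 0 a}
          ∩ ({p | StrictAnti p.2} ∩ ⋂ i, {p | 0 < p.2 i ∧ p.2 i < p.1}) := by
        ext p
        simp only [hAdef, Set.mem_inter_iff, Set.mem_setOf_eq, Set.mem_iInter, S,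
          Set.mem_Ioo, forall_and]
      rw [this]
      refine (measurable_fst measurableSet_Ioo).inter (MeasurableSet.inter ?_ ?_)
      · exact measurable_snd (measurable_strictAnti n)
      · refine .iInter fun i => MeasurableSet.inter ?_ ?_
        · exact measurableSet_lt measurable_const ((measurable_pi_apply i).comp measurable_snd)
        · exact measurableSet_lt ((measurable_pi_apply i).comp measurable_snd) measurable_fst
    set F : ℝ × (Fin n → ℝ) → ℝ := fun p => (a - p.1) ^ (β-1) * P β n p.1 p.2 with hFdef
    have hFmeas : Measurable F := by
      apply Measurable.mul
      · fun_prop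
      · exact measurable_P β n
    set G : ℝ × (Fin n → ℝ) → ℝ := A.indicator F with hGdef
    have hGmeas : Measurable G := hFmeas.indicator hA
    have hGnn : ∀ p, 0 ≤ G p := by
      intro p
      rw [hGdef]
      by_cases hp : p ∈ A
      · rw [Set.indicator_of_mem hp]
        have h1 : 0 ≤ (a - p.1) ^ (β-1) := Real.rpow_nonneg (by linarith [hp.1.2]) _
        exact mul_nonneg h1 (P_pos_on hp.2).le
      · rw [Set.indicator_of_notMem hp]
    -- the lintegral computation
    have hIoo : ∀ x : ℝ, x ∈ Set.Ioo 0 a →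
        (∫⁻ y, ENNReal.ofReal (G (x, y)) ∂(volume : Measure (Fin n → ℝ)))
          = ENNReal.ofReal ((a-x) ^ (β-1) * (x ^ γ * Cn)) := by
      intro x hx
      have hGx : ∀ y, G (x, y) = (S n x).indicator
          (fun y => (a-x) ^ (β-1) * P β n x y) y := by
        intro y
        by_cases hy : y ∈ S n x
        · rw [hGdef, Set.indicator_of_mem (show (x,y) ∈ A from ⟨hx, hy⟩),
            Set.indicator_of_mem hy]
        · rw [hGdef, Set.indicator_of_notMem (fun hmem => hy hmem.2),
            Set.indicator_of_notMem hy]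
      simp_rw [hGx]
      have hcomm : (fun y => ENNReal.ofReal ((S n x).indicator
            (fun y => (a-x) ^ (β-1) * P β n x y) y))
          = fun y => (S n x).indicator
            (fun y => ENNReal.ofReal ((a-x) ^ (β-1) * P β n x y)) y := by
        funext y
        by_cases hy : y ∈ S n x <;> simp [hy]
      rw [hcomm, lintegral_indicator (measurableSet_S n x)]
      have hrw : ∀ᵐ y ∂(volume.restrict (S n x)),
          ENNReal.ofReal ((a-x) ^ (β-1) * P β n x y)
            = ENNReal.ofReal ((a-x) ^ (β-1)) * ENNReal.ofReal (P β n x y) := by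
        filter_upwards with y
        rw [ENNReal.ofReal_mul (Real.rpow_nonneg (by linarith [hx.2]) _)]
      rw [lintegral_congr_ae hrw, lintegral_const_mul' _ _ ENNReal.ofReal_ne_top]
      have hIH := IH x hx.1
      have hlint : (∫⁻ y in S n x, ENNReal.ofReal (P β n x y))
          = ENNReal.ofReal (x ^ γ * Cn) := by
        rw [← ofReal_integral_eq_lintegral_ofReal hIH.1]
        · rw [hIH.2]
          congr 1
          rw [hCndef, hγdef]
          ring
        · filter_upwards [ae_restrict_mem (measurableSet_S n x)] with y hy
          exact (P_pos_on hy).le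
      rw [hlint, ← ENNReal.ofReal_mul (Real.rpow_nonneg (by linarith [hx.2]) _)]
    have houter : (∫⁻ p, ENNReal.ofReal (G p) ∂(volume : Measure (ℝ × (Fin n → ℝ))))
        = ENNReal.ofReal (a ^ (β+γ) * (Real.Gamma (γ+1) * Real.Gamma β / Real.Gamma (γ+1+β)) * Cn) := by
      rw [Measure.volume_eq_prod, lintegral_prod _ (hGmeas.ennreal_ofReal.aemeasurable)]
      have h1 : (fun x => ∫⁻ y, ENNReal.ofReal (G (x, y)) ∂(volume : Measure (Fin n → ℝ)))
          = fun x => (Set.Ioo 0 a).indicator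
              (fun x => ENNReal.ofReal (((a-x) ^ (β-1) * x ^ γ) * Cn)) x := by
        funext x
        by_cases hx : x ∈ Set.Ioo 0 a
        · rw [Set.indicator_of_mem hx, hIoo x hx]
          congr 1
          ring
        · rw [Set.indicator_of_notMem hx]
          have : ∀ y, G (x, y) = 0 := by
            intro y
            rw [hGdef, Set.indicator_of_notMem (fun hmem => hx hmem.1)]
          simp_rw [this]
          simp
      rw [h1, lintegral_indicator measurableSet_Ioo]
      rw [← ofReal_integral_eq_lintegral_ofReal ((beta_integrable ha hβ0 hγ).mul_const Cn)]
      · rw [MeasureTheory.integral_mul_const, beta_value ha hβ0 hγ]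
      · filter_upwards [ae_restrict_mem measurableSet_Ioo] with x hx
        have h2 : 0 ≤ (a-x) ^ (β-1) := Real.rpow_nonneg (by linarith [hx.2]) _
        have h3 : 0 ≤ x ^ γ := Real.rpow_nonneg hx.1.le _
        positivity
    have hGint : Integrable G := by
      refine ⟨hGmeas.aestronglyMeasurable, ?_⟩
      rw [hasFiniteIntegral_iff_ofReal (Filter.Eventually.of_forall hGnn), houter]
      exact ENNReal.ofReal_lt_top
    have hGval : ∫ p, G p
        = a ^ (β+γ) * (Real.Gamma (γ+1) * Real.Gamma β / Real.Gamma (γ+1+β)) * Cn := by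
      rw [integral_eq_lintegral_of_nonneg_ae (Filter.Eventually.of_forall hGnn)
        hGmeas.aestronglyMeasurable, houter, ENNReal.toReal_ofReal]
      have hAA : 0 ≤ a ^ (β+γ) := Real.rpow_nonneg ha.le _
      have hg1 : 0 ≤ Real.Gamma (γ+1) := (Real.Gamma_pos_of_pos (by linarith)).le
      have hg2 : 0 ≤ Real.Gamma β := (Real.Gamma_pos_of_pos hβ0).le
      have hg3 : 0 ≤ Real.Gamma (γ+1+β) := (Real.Gamma_pos_of_pos (by linarith)).le
      positivity
    -- transport through the equivalence
    set e := MeasurableEquiv.piFinSuccAbove (fun _ : Fin (n+1) => ℝ) 0 with hedef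
    have hmp : MeasurePreserving e :=
      volume_preserving_piFinSuccAbove (fun _ : Fin (n+1) => ℝ) 0
    have hGeq : ∀ s : Fin (n+1) → ℝ,
        (S (n+1) a).indicator (P β (n+1) a) s = G (e s) := by
      intro s
      have hes : e s = (s 0, Fin.tail s) := by
        rw [hedef]
        simp [MeasurableEquiv.piFinSuccAbove_apply]
      rw [hes]
      have hs : Fin.cons (s 0) (Fin.tail s) = s := Fin.cons_self_tail s
      by_cases h : s ∈ S (n+1) a
      · have hmem : (s 0, Fin.tail s) ∈ A := by
          have := mem_S_cons.mp (by rw [hs]; exact h)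
          exact ⟨this.1, this.2⟩
        rw [Set.indicator_of_mem h, hGdef, Set.indicator_of_mem hmem, hFdef]
        have := P_cons β n a (s 0) (Fin.tail s)
        rw [hs] at this
        exact this
      · have hmem : (s 0, Fin.tail s) ∉ A := by
          intro hmem
          exact h (by rw [← hs]; exact mem_S_cons.mpr ⟨hmem.1, hmem.2⟩)
        rw [Set.indicator_of_notMem h, hGdef, Set.indicator_of_notMem hmem]
    have hcomp : (S (n+1) a).indicator (P β (n+1) a) = G ∘ e := funext hGeq
    have hint : Integrable ((S (n+1) a).indicator (P β (n+1) a)) := by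
      rw [hcomp]
      exact (hmp.integrable_comp_emb e.measurableEmbedding).mpr hGint
    have hval : ∫ s, (S (n+1) a).indicator (P β (n+1) a) s = ∫ p, G p := by
      rw [hcomp]
      exact hmp.integral_comp e.measurableEmbedding G
    constructor
    · exact (integrable_indicator_iff (measurableSet_S (n+1) a)).mp hint
    · rw [← MeasureTheory.integral_indicator (measurableSet_S (n+1) a), hval, hGval]
      have hΓ1 : Real.Gamma (γ+1) = Real.Gamma (1+(n:ℝ)*β) := by rw [hγdef]; ring_nf
      have hΓ1pos : 0 < Real.Gamma (1+(n:ℝ)*β) := Real.Gamma_pos_of_pos (by positivity)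
      have hΓ2 : Real.Gamma (γ+1+β) = Real.Gamma (1+((n:ℕ)+1:ℝ)*β) := by
        congr 1; rw [hγdef]; ring
      have hexp : a ^ (β+γ) = a ^ ((((n:ℕ)+1:ℕ):ℝ)*β) := by
        congr 1; rw [hγdef]; push_cast; ring
      rw [hΓ1, hΓ2, hexp, hCndef]
      have h5 : Real.Gamma β ^ (n+1) = Real.Gamma β * Real.Gamma β ^ n := by ring
      push_cast
      field_simp
      ring

lemma ML {β : ℝ} (hβ0 : 0 < β) (x : ℝ) (hx : 0 ≤ x) :
    Summable (fun n : ℕ => x ^ n / Real.Gamma (1 + (n:ℝ)*β)) := by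
  set y : ℝ := max (x ^ (1/β)) 1 with hydef
  have hy1 : (1:ℝ) ≤ y := le_max_right _ _
  have hy0 : (0:ℝ) < y := lt_of_lt_of_le one_pos hy1
  have hxn : ∀ n : ℕ, x ^ n ≤ y ^ ((n:ℝ)*β) := by
    intro n
    have h1 : x ^ n = (x ^ (1/β)) ^ ((n:ℝ)*β) := by
      rw [← Real.rpow_natCast x n, ← Real.rpow_mul hx]
      congr 1
      field_simp
    rw [h1]
    exact Real.rpow_le_rpow (Real.rpow_nonneg hx _) (le_max_left _ _) (by positivity)
  -- eventually (2y)^m ≤ m.factorial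
  obtain ⟨M, hM⟩ : ∃ M : ℕ, ∀ m ≥ M, (2*y) ^ m ≤ (m.factorial : ℝ) := by
    have := (Real.summable_pow_div_factorial (2*y)).tendsto_atTop_zero
    have h2 := this.eventually_le_const (show (0:ℝ) < 1 by norm_num)
    rw [eventually_atTop] at h2
    obtain ⟨M, hM⟩ := h2
    refine ⟨M, fun m hm => ?_⟩
    have h3 := hM m hm
    have h4 : (0:ℝ) < (m.factorial : ℝ) := by positivity
    rw [div_le_one h4] at h3
    exact h3
  have htend : Tendsto (fun n : ℕ => (n:ℝ)*β) atTop atTop :=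
    Tendsto.atTop_mul_const hβ0 tendsto_natCast_atTop_atTop
  set r : ℝ := 2 ^ (-β) with hrdef
  have hr0 : 0 < r := Real.rpow_pos_of_pos two_pos _
  have hr1 : r < 1 := by
    rw [hrdef]
    calc (2:ℝ) ^ (-β) < 2 ^ (0:ℝ) := by
          apply Real.rpow_lt_rpow_of_exponent_lt one_lt_two
          linarith
      _ = 1 := Real.rpow_zero 2
  apply Summable.of_norm_bounded_eventually (g := fun n => (2*y) * r ^ n)
    ((summable_geometric_of_lt_one hr0.le hr1).mul_left _)
  rw [Nat.cofinite_eq_atTop]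
  filter_upwards [htend.eventually_ge_atTop 1, htend.eventually_ge_atTop (M:ℝ)]
    with n h1 h2
  set z : ℝ := (n:ℝ)*β with hzdef
  set m : ℕ := ⌊z⌋₊ with hmdef
  have hz0 : 0 ≤ z := by linarith
  have hm1 : 1 ≤ m := Nat.le_floor (by exact_mod_cast h1)
  have hmM : M ≤ m := Nat.le_floor h2
  have hΓpos : 0 < Real.Gamma (1 + z) := Real.Gamma_pos_of_pos (by linarith)
  have hfact : (m.factorial : ℝ) ≤ Real.Gamma (1 + z) := by
    have hmz : ((m:ℝ)) ≤ z := Nat.floor_le hz0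
    have hmono := Real.Gamma_strictMonoOn_Ici.monotoneOn
    have h3 : Real.Gamma ((m:ℝ) + 1) ≤ Real.Gamma (1 + z) := by
      rcases eq_or_lt_of_le hmz with he | hlt
      · rw [he, add_comm]
      · apply le_of_lt
        apply Real.Gamma_strictMonoOn_Ici
        · simp only [Set.mem_Ici]
          have : (1:ℝ) ≤ (m:ℝ) := by exact_mod_cast hm1
          linarith
        · simp only [Set.mem_Ici]; linarith
        · linarith
    rw [← Real.Gamma_nat_eq_factorial]
    push_cast
    exact h3
  have hnorm : ‖x ^ n / Real.Gamma (1 + z)‖ = x ^ n / Real.Gamma (1 + z) := by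
    rw [Real.norm_eq_abs, abs_of_nonneg (div_nonneg (pow_nonneg hx n) hΓpos.le)]
  rw [hnorm]
  have hstep1 : x ^ n / Real.Gamma (1 + z) ≤ y ^ z / (m.factorial : ℝ) := by
    apply div_le_div₀ (Real.rpow_nonneg hy0.le _) (hxn n) (by positivity) hfact
  have hstep2 : y ^ z ≤ y ^ (m+1 : ℕ) := by
    rw [← Real.rpow_natCast y (m+1)]
    apply Real.rpow_le_rpow_of_exponent_le hy1
    push_cast
    exact le_of_lt (Nat.lt_floor_add_one z)
  have hfact2 : (2*y) ^ m ≤ (m.factorial : ℝ) := hM m hmM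
  have h2ym : (0:ℝ) < (2*y) ^ m := by positivity
  have hstep3 : y ^ z / (m.factorial : ℝ) ≤ y ^ (m+1 : ℕ) / (2*y) ^ m := by
    apply div_le_div₀ (by positivity) hstep2 h2ym hfact2
  have hstep4 : y ^ (m+1 : ℕ) / (2*y) ^ m = y / 2 ^ m := by
    rw [mul_pow, pow_succ]
    field_simp
  have hstep5 : y / 2 ^ m ≤ (2*y) * r ^ n := by
    have h2m : (2:ℝ) ^ (z - 1) ≤ 2 ^ (m:ℝ) := by
      apply Real.rpow_le_rpow_of_exponent_le one_le_two
      have := Nat.lt_floor_add_one z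
      push_cast
      linarith [Nat.lt_floor_add_one z]
    have h2m' : (2:ℝ) ^ (z-1) ≤ 2 ^ m := by
      rw [← Real.rpow_natCast 2 m]
      exact h2m
    have hy' : 0 < (2:ℝ) ^ (z-1) := Real.rpow_pos_of_pos two_pos _
    have h6 : y / 2 ^ m ≤ y / 2 ^ (z-1) :=
      div_le_div_of_nonneg_left hy0.le hy' h2m'
    have h7 : y / 2 ^ (z-1) = (2*y) * r ^ n := by
      rw [hrdef, ← Real.rpow_natCast (2 ^ (-β)) n, ← Real.rpow_mul (by norm_num : (0:ℝ) ≤ 2)]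
      rw [div_eq_mul_inv, ← Real.rpow_neg (by norm_num : (0:ℝ) ≤ 2)]
      rw [show -(z-1) = 1 + (-β * n) by rw [hzdef]; ring]
      rw [Real.rpow_add two_pos, Real.rpow_one]
      ring
    linarith
  linarith


end SNB

open SNB Set Filter




/-- Bound on the Neumann terms of the weakly singular Volterra equation:
`|y_n(t)| ≤ ‖f‖ ‖K‖^n (λ t^β)^n Γ(β)^n / Γ(1+nβ)`, and consequently the Neumann
series converges absolutely. -/

theorem singular_neumann_bound (T lam β : ℝ) (hT : 0 < T) (hlam : 0 < lam)
    (hβ : β ∈ Set.Ioo (0 : ℝ) 1)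
    (K : ℝ → ℝ → ℝ) (f : ℝ → ℝ)
    (hK : Continuous fun p : ℝ × ℝ => K p.1 p.2) (hf : Continuous f)
    (CK Cf : ℝ)
    (hCK : ∀ t ∈ Set.Icc (0 : ℝ) T, ∀ s ∈ Set.Icc (0 : ℝ) T, |K t s| ≤ CK)
    (hCf : ∀ t ∈ Set.Icc (0 : ℝ) T, |f t| ≤ Cf)
    (t : ℝ) (ht : t ∈ Set.Icc (0 : ℝ) T) :
    (∀ n : ℕ,
      |singularNeumannTerm lam β K f t n|
        ≤ Cf * CK ^ n * (lam * t ^ β) ^ n * Real.Gamma β ^ n / Real.Gamma (1 + n * β)) ∧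
    Summable (fun n : ℕ => |singularNeumannTerm lam β K f t n|) := by
  obtain ⟨hβ0, hβ1⟩ := hβ
  have hCK0 : 0 ≤ CK := le_trans (abs_nonneg _)
    (hCK 0 ⟨le_refl 0, hT.le⟩ 0 ⟨le_refl 0, hT.le⟩)
  have hCf0 : 0 ≤ Cf := le_trans (abs_nonneg _) (hCf t ht)
  have hΓβ : 0 < Real.Gamma β := Real.Gamma_pos_of_pos hβ0
  have hbound : ∀ n : ℕ,
      |singularNeumannTerm lam β K f t n|
        ≤ Cf * CK ^ n * (lam * t ^ β) ^ n * Real.Gamma β ^ n / Real.Gamma (1 + n * β) := by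
    intro n
    match n with
    | 0 =>
      have h0 : singularNeumannTerm lam β K f t 0 = f t := by
        rw [singularNeumannTerm]
        have hset : {s : Fin 0 → ℝ | StrictAnti s ∧ ∀ i, s i ∈ Set.Ioo 0 t} = Set.univ :=
          S_zero t
        rw [hset]
        have hvol : (volume : Measure (Fin 0 → ℝ)) Set.univ = 1 := by
          simp [volume_pi, Measure.pi_univ]
        rw [Measure.restrict_univ]
        simp only [Finset.univ_eq_empty, Finset.prod_empty, one_mul, eq_self_iff_true,
          dite_true]
        rw [MeasureTheory.integral_const, measureReal_def, hvol]
        simp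
      rw [h0]
      have : Cf * CK ^ 0 * (lam * t ^ β) ^ 0 * Real.Gamma β ^ 0
          / Real.Gamma (1 + (0:ℕ) * β) = Cf := by
        simp [Real.Gamma_one]
      rw [this]
      exact hCf t ht
    | Nat.succ m =>
      show |singularNeumannTerm lam β K f t (m+1)|
        ≤ Cf * CK ^ (m+1) * (lam * t ^ β) ^ (m+1) * Real.Gamma β ^ (m+1)
          / Real.Gamma (1 + ((m+1 : ℕ) : ℝ) * β)
      set n := m + 1 with hndef
      rcases eq_or_lt_of_le ht.1 with ht0 | ht0
      · -- t = 0
        have hset : {s : Fin n → ℝ | StrictAnti s ∧ ∀ i, s i ∈ Set.Ioo 0 t} = ∅ := by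
          ext s
          simp only [Set.mem_setOf_eq, Set.mem_empty_iff_false, iff_false]
          rintro ⟨-, hmem⟩
          have h5 := hmem 0
          rw [← ht0] at h5
          simp at h5
        have h0 : singularNeumannTerm lam β K f t n = 0 := by
          rw [singularNeumannTerm, hset, Measure.restrict_empty, integral_zero_measure,
            mul_zero]
        rw [h0, abs_zero, ← ht0, Real.zero_rpow hβ0.ne', mul_zero,
          zero_pow (Nat.succ_ne_zero m), mul_zero, zero_mul, zero_div]
      · -- t > 0
        have hkey := keyP hβ0 hβ1 n t ht0
        set F : (Fin n → ℝ) → ℝ := fun s =>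
          (∏ i : Fin n,
            (K (if h : (i : ℕ) = 0 then t else s ⟨(i : ℕ) - 1, by have := i.isLt; omega⟩)
               (s i)
             * ((if h : (i : ℕ) = 0 then t else s ⟨(i : ℕ) - 1, by have := i.isLt; omega⟩)
                 - s i) ^ (-(1 - β))))
          * f (if h : n = 0 then t else s ⟨n - 1, by omega⟩) with hFdef
        have hterm : singularNeumannTerm lam β K f t n = lam ^ n * ∫ s in S n t, F s := rfl
        have hptwise : ∀ s ∈ S n t, |F s| ≤ (CK ^ n * Cf) * P β n t s := by
          intro s hs
          have hmem : ∀ i : Fin n, s i ∈ Set.Icc 0 T := fun i =>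
            ⟨(hs.2 i).1.le, le_trans (hs.2 i).2.le ht.2⟩
          have hprev : ∀ i : Fin n,
              (if h : (i : ℕ) = 0 then t else s ⟨(i : ℕ) - 1, by have := i.isLt; omega⟩)
                ∈ Set.Icc 0 T := by
            intro i
            by_cases h : (i : ℕ) = 0
            · rw [dif_pos h]; exact ht
            · rw [dif_neg h]; exact hmem _
          have hdiff : ∀ i : Fin n,
              0 < (if h : (i : ℕ) = 0 then t else s ⟨(i : ℕ) - 1, by have := i.isLt; omega⟩)
                - s i := by
            intro i
            by_cases h : (i : ℕ) = 0
            · rw [dif_pos h]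
              exact sub_pos.mpr (hs.2 i).2
            · rw [dif_neg h]
              apply sub_pos.mpr
              apply hs.1
              show ((i:ℕ) - 1 : ℕ) < (i:ℕ)
              omega
          rw [hFdef]
          dsimp only
          rw [abs_mul, Finset.abs_prod]
          have hlast : |f (if h : n = 0 then t else s ⟨n - 1, by omega⟩)| ≤ Cf := by
            by_cases h : n = 0
            · rw [dif_pos h]; exact hCf t ht
            · rw [dif_neg h]; exact hCf _ (hmem _)
          have hfac : ∀ i : Fin n,
              |K (if h : (i : ℕ) = 0 then t else s ⟨(i : ℕ) - 1, by have := i.isLt; omega⟩)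
                  (s i)
                * ((if h : (i : ℕ) = 0 then t else s ⟨(i : ℕ) - 1, by have := i.isLt; omega⟩)
                    - s i) ^ (-(1 - β))|
              ≤ CK * ((if h : (i : ℕ) = 0 then t
                  else s ⟨(i : ℕ) - 1, by have := i.isLt; omega⟩) - s i) ^ (β - 1) := by
            intro i
            rw [abs_mul]
            rw [show -(1 - β) = β - 1 by ring]
            rw [abs_of_pos (Real.rpow_pos_of_pos (hdiff i) _)]
            apply mul_le_mul_of_nonneg_right (hCK _ (hprev i) _ (hmem i))
              (Real.rpow_pos_of_pos (hdiff i) _).le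
          have hprodle : (∏ i : Fin n,
              |K (if h : (i : ℕ) = 0 then t else s ⟨(i : ℕ) - 1, by have := i.isLt; omega⟩)
                  (s i)
                * ((if h : (i : ℕ) = 0 then t else s ⟨(i : ℕ) - 1, by have := i.isLt; omega⟩)
                    - s i) ^ (-(1 - β))|)
              ≤ ∏ i : Fin n, CK * ((if h : (i : ℕ) = 0 then t
                  else s ⟨(i : ℕ) - 1, by have := i.isLt; omega⟩) - s i) ^ (β - 1) :=
            Finset.prod_le_prod (fun i _ => abs_nonneg _) (fun i _ => hfac i)
          have hprodeq : (∏ i : Fin n, CK * ((if h : (i : ℕ) = 0 then t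
                  else s ⟨(i : ℕ) - 1, by have := i.isLt; omega⟩) - s i) ^ (β - 1))
              = CK ^ n * P β n t s := by
            rw [Finset.prod_mul_distrib, Finset.prod_const, P]
            congr 1
            simp
          calc (∏ i : Fin n, |_|) * |f _|
              ≤ (CK ^ n * P β n t s) * Cf := by
                apply mul_le_mul (hprodeq ▸ hprodle) hlast (abs_nonneg _)
                have hP : 0 < P β n t s := by
                  apply Finset.prod_pos
                  intro i _
                  exact Real.rpow_pos_of_pos (hdiff i) _
                positivity
            _ = (CK ^ n * Cf) * P β n t s := by ring
        have hintle : |∫ s in S n t, F s|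
            ≤ (CK ^ n * Cf) * (t ^ ((n:ℝ)*β) * Real.Gamma β ^ n / Real.Gamma (1+(n:ℝ)*β)) := by
          have h1 : |∫ s in S n t, F s| ≤ ∫ s in S n t, |F s| := by
            rw [← Real.norm_eq_abs]
            refine (norm_integral_le_integral_norm F).trans ?_
            apply le_of_eq
            congr
          have h2 : (∫ s in S n t, |F s|) ≤ ∫ s in S n t, (CK ^ n * Cf) * P β n t s := by
            apply integral_mono_of_nonneg
            · filter_upwards with s using abs_nonneg _
            · exact hkey.1.const_mul _
            · filter_upwards [ae_restrict_mem (measurableSet_S n t)] with s hs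
              exact hptwise s hs
          have h3 : (∫ s in S n t, (CK ^ n * Cf) * P β n t s)
              = (CK ^ n * Cf) * (t ^ ((n:ℝ)*β) * Real.Gamma β ^ n / Real.Gamma (1+(n:ℝ)*β)) := by
            rw [MeasureTheory.integral_const_mul, hkey.2]
          linarith
        rw [hterm, abs_mul, abs_pow, abs_of_pos hlam]
        have hrpow : t ^ ((n:ℝ)*β) = (t ^ β) ^ n := by
          rw [mul_comm, Real.rpow_mul ht0.le, Real.rpow_natCast]
        calc lam ^ n * |∫ s in S n t, F s|
            ≤ lam ^ n * ((CK ^ n * Cf) * (t ^ ((n:ℝ)*β) * Real.Gamma β ^ n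
                / Real.Gamma (1+(n:ℝ)*β))) := by
              apply mul_le_mul_of_nonneg_left hintle (by positivity)
          _ = Cf * CK ^ n * (lam * t ^ β) ^ n * Real.Gamma β ^ n
                / Real.Gamma (1 + (n:ℕ) * β) := by
              rw [hrpow, mul_pow]
              push_cast
              ring
  refine ⟨hbound, ?_⟩
  set x : ℝ := CK * (lam * t ^ β) * Real.Gamma β with hxdef
  have hx : 0 ≤ x := by
    have : (0:ℝ) ≤ t ^ β := Real.rpow_nonneg ht.1 _
    positivity
  apply Summable.of_nonneg_of_le (fun n => abs_nonneg _) hbound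
  have heq : (fun n : ℕ => Cf * CK ^ n * (lam * t ^ β) ^ n * Real.Gamma β ^ n
      / Real.Gamma (1 + (n:ℕ) * β)) = fun n : ℕ => Cf * (x ^ n / Real.Gamma (1 + (n:ℝ)*β)) := by
    funext n
    rw [hxdef, mul_pow, mul_pow]
    push_cast
    ring
  rw [heq]
  exact (ML hβ0 x hx).mul_left Cf
end
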